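/- Let N be an n × n complex Hermitian matrix with det N ≠ 0, let a ∈ ℂⁿ be a column vector, let m ∈ ℝ, and let M be the (n+1) × (n+1) Hermitian matrix given in block form by M = [[N, a], [a*, m]], where a* is the conjugate transpose of a. If det M ≠ 0, then |σ(M) − σ(N)| = 1, where σ denotes the signature (number of positive eigenvalues minus number of negative eigenvalues, counted with multiplicity). (Lemma 4.12(b): adding one row and column to an invertible Hermitian matrix changes the signature by exactly ±1 when the result remains invertible.) -/

import Mathlib

open Matrix

/-- The signature of a Hermitian complex matrix: the number of positive
eigenvalues minus the number of negative eigenvalues (with multiplicity). -/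
noncomputable def hermitianSignature {ι : Type*} [Fintype ι] [DecidableEq ι]
    {M : Matrix ι ι ℂ} (hM : M.IsHermitian) : ℤ :=
  ((Finset.univ.filter fun i => 0 < hM.eigenvalues i).card : ℤ) -
    ((Finset.univ.filter fun i => hM.eigenvalues i < 0).card : ℤ)

section Auxiliary

set_option linter.unusedSectionVars false
set_option linter.unusedVariables false
set_option linter.unusedTactic false

variable {ι : Type*} [Fintype ι] [DecidableEq ι]

noncomputable def qf (A : Matrix ι ι ℂ) (x : ι → ℂ) : ℝ := (star x ⬝ᵥ A *ᵥ x).re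

lemma qf_conj (A P : Matrix ι ι ℂ) (x : ι → ℂ) :
    qf (Pᴴ * A * P) x = qf A (P *ᵥ x) := by
  unfold qf
  rw [← mulVec_mulVec, ← mulVec_mulVec, dotProduct_mulVec, star_mulVec]

lemma qf_diagonal (d : ι → ℝ) (y : ι → ℂ) :
    qf (diagonal ((RCLike.ofReal : ℝ → ℂ) ∘ d)) y = ∑ i, d i * Complex.normSq (y i) := by
  show (star y ⬝ᵥ diagonal (fun i => ((d i : ℝ) : ℂ)) *ᵥ y).re = _
  simp only [mulVec_diagonal, dotProduct, Pi.star_apply, Function.comp_apply]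
  rw [Complex.re_sum]
  congr 1; funext i
  have h : (starRingEnd ℂ) (y i) * (↑(d i) * y i)
      = (d i : ℂ) * ((Complex.normSq (y i) : ℂ)) := by
    rw [Complex.normSq_eq_conj_mul_self]; push_cast; ring
  simp [h]

/-- coordinate subspace -/
noncomputable def coordSub (S : Finset ι) : Submodule ℂ (ι → ℂ) where
  carrier := {x | ∀ i ∉ S, x i = 0}
  add_mem' := fun hx hy i hi => by simp [hx i hi, hy i hi]
  zero_mem' := fun i _ => rfl
  smul_mem' := fun c x hx i hi => by simp [hx i hi]

lemma mem_coordSub {S : Finset ι} {x : ι → ℂ} : x ∈ coordSub S ↔ ∀ i ∉ S, x i = 0 := Iff.rfl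

noncomputable def coordSubEquiv (S : Finset ι) : coordSub S ≃ₗ[ℂ] (S → ℂ) where
  toFun x := fun i => x.1 i
  invFun y := ⟨fun i => if h : i ∈ S then y ⟨i, h⟩ else 0, fun i hi => by simp [hi]⟩
  map_add' x y := rfl
  map_smul' c x := rfl
  left_inv x := by
    ext i
    by_cases h : i ∈ S <;> simp [h]
    exact (x.2 i h).symm
  right_inv y := by ext i; simp

lemma finrank_coordSub (S : Finset ι) : Module.finrank ℂ (coordSub S) = S.card := by
  rw [(coordSubEquiv S).finrank_eq, Module.finrank_fintype_fun_eq_card, Fintype.card_coe]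

noncomputable def posCount {A : Matrix ι ι ℂ} (hA : A.IsHermitian) : ℕ :=
  (Finset.univ.filter fun i => 0 < hA.eigenvalues i).card

noncomputable def mulVecEquiv (P : Matrix ι ι ℂ) (hP : IsUnit P.det) : (ι → ℂ) ≃ₗ[ℂ] (ι → ℂ) :=
  haveI := P.invertibleOfIsUnitDet hP
  LinearEquiv.ofLinear (mulVecLin P) (mulVecLin P⁻¹)
    (by rw [← mulVecLin_mul, mul_nonsing_inv P hP, mulVecLin_one])
    (by rw [← mulVecLin_mul, nonsing_inv_mul P hP, mulVecLin_one])

lemma mulVecEquiv_apply (P : Matrix ι ι ℂ) (hP : IsUnit P.det) (x : ι → ℂ) :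
    mulVecEquiv P hP x = P *ᵥ x := rfl

/-- canonical positive/nonpositive subspaces -/

lemma exists_canonical {A : Matrix ι ι ℂ} (hA : A.IsHermitian) :
    ∃ V W : Submodule ℂ (ι → ℂ),
      Module.finrank ℂ V = posCount hA ∧
      Module.finrank ℂ W = Fintype.card ι - posCount hA ∧
      (∀ x ∈ V, x ≠ 0 → 0 < qf A x) ∧ (∀ x ∈ W, qf A x ≤ 0) := by
  set S : Finset ι := Finset.univ.filter fun i => 0 < hA.eigenvalues i with hS
  have hUdet : IsUnit (hA.eigenvectorUnitary : Matrix ι ι ℂ).det := by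
    have h1 : (hA.eigenvectorUnitary : Matrix ι ι ℂ) * star (hA.eigenvectorUnitary : Matrix ι ι ℂ)
        = 1 := mem_unitaryGroup_iff.mp hA.eigenvectorUnitary.2
    have h2 := congrArg det h1
    rw [det_mul, det_one] at h2
    exact IsUnit.of_mul_eq_one _ h2
  set e := mulVecEquiv _ hUdet with he
  have key : ∀ y : ι → ℂ, qf A (e.toLinearMap y)
      = ∑ i, hA.eigenvalues i * Complex.normSq (y i) := by
    intro y
    show qf A ((hA.eigenvectorUnitary : Matrix ι ι ℂ) *ᵥ y) = _
    rw [← qf_conj, ← star_eq_conjTranspose, show star (hA.eigenvectorUnitary : Matrix ι ι ℂ) * A *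
        (hA.eigenvectorUnitary : Matrix ι ι ℂ) = diagonal (RCLike.ofReal ∘ hA.eigenvalues) from by
        have h := hA.conjStarAlgAut_star_eigenvectorUnitary
        simpa only [Unitary.conjStarAlgAut_apply, Unitary.coe_star, star_star] using h,
      qf_diagonal]
  refine ⟨(coordSub S).map e.toLinearMap, (coordSub Sᶜ).map e.toLinearMap, ?_, ?_, ?_, ?_⟩
  · rw [LinearEquiv.finrank_map_eq, finrank_coordSub]; simp [hS, posCount]
  · rw [LinearEquiv.finrank_map_eq, finrank_coordSub, Finset.card_compl]; simp [hS, posCount]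
  · rintro x ⟨y, hy, rfl⟩ hne
    rw [key]
    have hy0 : y ≠ 0 := fun h => hne (by rw [h, map_zero])
    obtain ⟨j, hj⟩ : ∃ j, y j ≠ 0 := Function.ne_iff.1 hy0
    have hjS : j ∈ S := by
      by_contra h; exact hj ((mem_coordSub.1 hy) j h)
    refine Finset.sum_pos' ?_ ⟨j, Finset.mem_univ j, ?_⟩
    · intro i _
      by_cases hiS : i ∈ S
      · have h1 : 0 < hA.eigenvalues i := (Finset.mem_filter.1 hiS).2
        exact mul_nonneg h1.le (Complex.normSq_nonneg _)
      · rw [(mem_coordSub.1 hy) i hiS]; simp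
    · have h1 : 0 < hA.eigenvalues j := (Finset.mem_filter.1 hjS).2
      exact mul_pos h1 (Complex.normSq_pos.mpr hj)
  · rintro x ⟨y, hy, rfl⟩
    rw [key]
    apply Finset.sum_nonpos
    intro i _
    by_cases hiS : i ∈ S
    · rw [(mem_coordSub.1 hy) i (by simpa using hiS)]; simp
    · have : hA.eigenvalues i ≤ 0 := by
        by_contra h
        exact hiS (Finset.mem_filter.2 ⟨Finset.mem_univ i, lt_of_not_ge h⟩)
      have h2 : 0 ≤ Complex.normSq (y i) := Complex.normSq_nonneg _
      exact mul_nonpos_of_nonpos_of_nonneg this h2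

/-- no-overlap dimension bound -/

lemma dim_bound {A : Matrix ι ι ℂ} (V W : Submodule ℂ (ι → ℂ))
    (hVpos : ∀ x ∈ V, x ≠ 0 → 0 < qf A x) (hWnp : ∀ x ∈ W, qf A x ≤ 0) :
    Module.finrank ℂ V + Module.finrank ℂ W ≤ Fintype.card ι := by
  have hdisj : V ⊓ W = ⊥ := by
    rw [eq_bot_iff]
    intro x hx
    by_contra hne
    have hx0 : x ≠ 0 := fun h => hne (h ▸ Submodule.zero_mem ⊥)
    exact absurd (hWnp x hx.2) (not_le.2 (hVpos x hx.1 hx0))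
  have := Submodule.finrank_sup_add_finrank_inf_eq V W
  rw [hdisj] at this
  simp only [finrank_bot, add_zero] at this
  rw [← this]
  calc Module.finrank ℂ ↥(V ⊔ W) ≤ Module.finrank ℂ (ι → ℂ) := Submodule.finrank_le _
    _ = Fintype.card ι := Module.finrank_fintype_fun_eq_card ℂ

lemma posCount_le (hA : (A : Matrix ι ι ℂ).IsHermitian) : posCount hA ≤ Fintype.card ι :=
  le_trans (Finset.card_filter_le _ _) (le_of_eq (Finset.card_univ))

/-- characterization -/

lemma posCount_eq_of_subspaces {A : Matrix ι ι ℂ} (hA : A.IsHermitian) {p : ℕ}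
    (hp : p ≤ Fintype.card ι)
    (V W : Submodule ℂ (ι → ℂ))
    (hV : Module.finrank ℂ V = p) (hW : Module.finrank ℂ W = Fintype.card ι - p)
    (hVpos : ∀ x ∈ V, x ≠ 0 → 0 < qf A x) (hWnp : ∀ x ∈ W, qf A x ≤ 0) :
    posCount hA = p := by
  obtain ⟨V₀, W₀, hV₀, hW₀, hV₀pos, hW₀np⟩ := exists_canonical hA
  have h1 := dim_bound V W₀ hVpos hW₀np
  have h2 := dim_bound V₀ W hV₀pos hWnp
  have h3 := posCount_le hA
  omega

/-- Sylvester's law of inertia (congruence invariance of posCount) -/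

lemma posCount_conj {A P : Matrix ι ι ℂ} (hA : A.IsHermitian) (hP : IsUnit P.det)
    (hA' : (Pᴴ * A * P).IsHermitian) : posCount hA' = posCount hA := by
  obtain ⟨V₀, W₀, hV₀, hW₀, hV₀pos, hW₀np⟩ := exists_canonical hA
  set e := mulVecEquiv P hP with he
  have hple : posCount hA ≤ Fintype.card ι := posCount_le hA
  refine posCount_eq_of_subspaces hA' hple (V₀.map e.symm.toLinearMap) (W₀.map e.symm.toLinearMap)
    (by rw [LinearEquiv.finrank_map_eq, hV₀]) (by rw [LinearEquiv.finrank_map_eq, hW₀]) ?_ ?_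
  · rintro x ⟨y, hy, rfl⟩ hne
    rw [qf_conj]
    have h : P *ᵥ (e.symm.toLinearMap y) = y := e.apply_symm_apply y
    rw [h]
    exact hV₀pos y hy (fun h2 => hne (by rw [h2, map_zero]))
  · rintro x ⟨y, hy, rfl⟩
    rw [qf_conj]
    have h : P *ᵥ (e.symm.toLinearMap y) = y := e.apply_symm_apply y
    rw [h]
    exact hW₀np y hy

noncomputable def sumEquiv (ι : Type*) : ((ι → ℂ) × ℂ) ≃ₗ[ℂ] ((ι ⊕ Unit) → ℂ) where
  toFun p := Sum.elim p.1 (fun _ => p.2)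
  invFun x := (x ∘ Sum.inl, x (Sum.inr ()))
  map_add' p q := funext fun i => by cases i <;> rfl
  map_smul' c p := funext fun i => by cases i <;> rfl
  left_inv p := rfl
  right_inv x := funext fun i => by
    cases i with
    | inl i => rfl
    | inr u => cases u; rfl

lemma qf_blockDiag (A : Matrix ι ι ℂ) (s : ℝ) (v : ι → ℂ) (t : ℂ) :
    qf (fromBlocks A 0 0 (fun (_ _ : Unit) => (s : ℂ)))
      ((sumEquiv ι).toLinearMap (v, t)) = qf A v + s * Complex.normSq t := by
  show qf _ (Sum.elim v (fun _ => t)) = _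
  unfold qf
  erw [fromBlocks_mulVec]
  have h0 : ∀ w : Unit → ℂ, (0 : Matrix ι Unit ℂ) *ᵥ w = 0 := fun w => by simp
  have h1 : ∀ w : ι → ℂ, (0 : Matrix Unit ι ℂ) *ᵥ w = 0 := fun w => by simp
  rw [h0, h1, add_zero, zero_add, Function.star_sumElim, sumElim_dotProduct_sumElim,
    Complex.add_re]
  congr 1
  have hre : ((star fun (_ : Unit) => t) ⬝ᵥ (fun (_ _ : Unit) => (s:ℂ)) *ᵥ ((Sum.elim v fun _ => t) ∘ Sum.inr)) = (starRingEnd ℂ) t * ((s:ℂ) * t) := by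
    simp [dotProduct, mulVec, Function.comp]
  rw [hre]
  have : (starRingEnd ℂ) t * ((s:ℂ) * t) = (s:ℂ) * (Complex.normSq t : ℂ) := by
    rw [Complex.normSq_eq_conj_mul_self]; ring
  rw [this]
  simp

lemma qf_zero (A : Matrix ι ι ℂ) : qf A 0 = 0 := by simp [qf]

/-- equiv between a product of submodules and product of types -/

noncomputable def subProdEquiv {M N : Type*} [AddCommGroup M] [AddCommGroup N]
    [Module ℂ M] [Module ℂ N] (p : Submodule ℂ M) (q : Submodule ℂ N) :
    (p.prod q) ≃ₗ[ℂ] (p × q) where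
  toFun x := (⟨x.1.1, x.2.1⟩, ⟨x.1.2, x.2.2⟩)
  invFun x := ⟨(x.1.1, x.2.1), ⟨x.1.2, x.2.2⟩⟩
  map_add' x y := rfl
  map_smul' c x := rfl
  left_inv x := rfl
  right_inv x := rfl

lemma finrank_subProd {M N : Type*} [AddCommGroup M] [AddCommGroup N]
    [Module ℂ M] [Module ℂ N] [FiniteDimensional ℂ M] [FiniteDimensional ℂ N]
    (p : Submodule ℂ M) (q : Submodule ℂ N) :
    Module.finrank ℂ (p.prod q) = Module.finrank ℂ p + Module.finrank ℂ q := by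
  rw [(subProdEquiv p q).finrank_eq, Module.finrank_prod]

lemma posCount_blockDiag {A : Matrix ι ι ℂ} (hA : A.IsHermitian) {s : ℝ} (hs : s ≠ 0)
    (hD : (fromBlocks A 0 0 (fun (_ _ : Unit) => (s : ℂ))).IsHermitian) :
    posCount hD = posCount hA + (if 0 < s then 1 else 0) := by
  obtain ⟨V₀, W₀, hV₀, hW₀, hV₀pos, hW₀np⟩ := exists_canonical hA
  set e := (sumEquiv ι).toLinearMap with he
  have hcard : Fintype.card (ι ⊕ Unit) = Fintype.card ι + 1 := by simp
  have hple := posCount_le hA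
  by_cases hpos : 0 < s
  · rw [if_pos hpos]
    refine posCount_eq_of_subspaces hD (by omega) ((V₀.prod ⊤).map e) ((W₀.prod ⊥).map e)
      ?_ ?_ ?_ ?_
    · rw [LinearEquiv.finrank_map_eq, finrank_subProd, hV₀, finrank_top,
        Module.finrank_self]
    · rw [LinearEquiv.finrank_map_eq, finrank_subProd, hW₀, finrank_bot]; omega
    · rintro x ⟨⟨v, t⟩, ⟨hv, -⟩, rfl⟩ hne
      rw [qf_blockDiag]
      rcases eq_or_ne v 0 with rfl | hv0
      · have ht : t ≠ 0 := by
          rintro rfl; exact hne (map_zero e)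
        rw [qf_zero, zero_add]
        exact mul_pos hpos (Complex.normSq_pos.2 ht)
      · have h1 := hV₀pos v hv hv0
        have h2 : 0 ≤ s * Complex.normSq t := mul_nonneg hpos.le (Complex.normSq_nonneg t)
        linarith
    · rintro x ⟨⟨v, t⟩, ⟨hv, ht⟩, rfl⟩
      have ht0 : t = 0 := ht
      rw [qf_blockDiag, ht0]
      simpa using hW₀np v hv
  · rw [if_neg hpos]
    have hneg : s < 0 := lt_of_le_of_ne (not_lt.1 hpos) hs
    refine posCount_eq_of_subspaces hD (by omega) ((V₀.prod ⊥).map e) ((W₀.prod ⊤).map e)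
      ?_ ?_ ?_ ?_
    · rw [LinearEquiv.finrank_map_eq, finrank_subProd, hV₀, finrank_bot]
    · rw [LinearEquiv.finrank_map_eq, finrank_subProd, hW₀, finrank_top,
        Module.finrank_self]; omega
    · rintro x ⟨⟨v, t⟩, ⟨hv, ht⟩, rfl⟩ hne
      have ht0 : t = 0 := ht
      have hv0 : v ≠ 0 := by
        rintro rfl
        rw [ht0] at hne
        exact hne (map_zero e)
      rw [qf_blockDiag, ht0]
      simpa using hV₀pos v hv hv0
    · rintro x ⟨⟨v, t⟩, ⟨hv, -⟩, rfl⟩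
      rw [qf_blockDiag]
      have h1 := hW₀np v hv
      have h2 : s * Complex.normSq t ≤ 0 :=
        mul_nonpos_of_nonpos_of_nonneg hneg.le (Complex.normSq_nonneg t)
      linarith

lemma posCount_congr {A A' : Matrix ι ι ℂ} (h : A = A') (hA : A.IsHermitian)
    (hA' : A'.IsHermitian) : posCount hA = posCount hA' := by subst h; rfl

lemma posCount_conj' {A A' P : Matrix ι ι ℂ}
    (hA : A.IsHermitian) (hP : IsUnit P.det)
    (hA' : A'.IsHermitian) (h : A' = Pᴴ * A * P) : posCount hA' = posCount hA := by
  subst h; exact posCount_conj hA hP hA' 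

lemma sig_eq {A : Matrix ι ι ℂ} (hA : A.IsHermitian) (hdet : A.det ≠ 0) :
    hermitianSignature hA = 2 * (posCount hA : ℤ) - Fintype.card ι := by
  have hz : ∀ i, hA.eigenvalues i ≠ 0 := by
    intro i h
    rw [hA.det_eq_prod_eigenvalues] at hdet
    exact hdet (Finset.prod_eq_zero (Finset.mem_univ i) (by rw [h]; simp))
  have hfe : (Finset.univ.filter fun i => hA.eigenvalues i < 0) =
      (Finset.univ.filter fun i => ¬ 0 < hA.eigenvalues i) := by
    apply Finset.filter_congr
    intro i _
    constructor
    · exact fun h => not_lt.2 h.le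
    · exact fun h => ((hz i).lt_or_gt).resolve_right (by simpa using h)
  have hpart := Finset.card_filter_add_card_filter_not
    (s := (Finset.univ : Finset ι)) (p := fun i => 0 < hA.eigenvalues i)
  rw [Finset.card_univ] at hpart
  unfold hermitianSignature posCount
  rw [hfe]
  omega

end Auxiliary

/-- Lemma 4.12(b): if `N` is an invertible Hermitian matrix and
`M = [[N, a], [a*, m]]` is an invertible Hermitian bordered extension of `N`,
then the signatures of `M` and `N` differ by exactly one. -/
theorem hermitian_bordered_signature {n : ℕ} {N : Matrix (Fin n) (Fin n) ℂ}
    (hN : N.IsHermitian) (hdetN : N.det ≠ 0) (a : Fin n → ℂ) (m : ℝ)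
    (M : Matrix (Fin n ⊕ Unit) (Fin n ⊕ Unit) ℂ)
    (hMdef : M = Matrix.fromBlocks N
      (fun i (_ : Unit) => a i)
      (fun (_ : Unit) j => starRingEnd ℂ (a j))
      (fun (_ : Unit) (_ : Unit) => (m : ℂ)))
    (hM : M.IsHermitian) (hdetM : M.det ≠ 0) :
    |hermitianSignature hM - hermitianSignature hN| = 1 := by
  letI : Invertible N := N.invertibleOfIsUnitDet (isUnit_iff_ne_zero.2 hdetN)
  set B : Matrix (Fin n) Unit ℂ := fun i _ => a i with hB
  set C : Matrix Unit (Fin n) ℂ := fun _ j => starRingEnd ℂ (a j) with hC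
  set Dm : Matrix Unit Unit ℂ := fun _ _ => (m : ℂ) with hDm
  set L : Matrix (Fin n ⊕ Unit) (Fin n ⊕ Unit) ℂ := fromBlocks 1 (⅟N * B) 0 1 with hL
  set Sc : Matrix Unit Unit ℂ := Dm - C * ⅟N * B with hSc
  set D0 : Matrix (Fin n ⊕ Unit) (Fin n ⊕ Unit) ℂ := fromBlocks N 0 0 Sc with hD0
  have hCB : C = Bᴴ := by
    ext u j; simp [hB, hC, conjTranspose_apply]; rfl
  have hinv : (⅟N : Matrix (Fin n) (Fin n) ℂ)ᴴ = ⅟N := by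
    rw [invOf_eq_nonsing_inv, conjTranspose_nonsing_inv, hN.eq]
  have hL1 : fromBlocks (1 : Matrix (Fin n) (Fin n) ℂ) 0 (C * ⅟N) (1 : Matrix Unit Unit ℂ)
      = Lᴴ := by
    rw [hL, fromBlocks_conjTranspose, conjTranspose_one, conjTranspose_one, conjTranspose_zero,
      conjTranspose_mul, hinv, hCB]
  have hMeq : M = Lᴴ * D0 * L := by
    rw [hMdef]
    have := fromBlocks_eq_of_invertible₁₁ N B C Dm
    rw [hL1] at this
    exact this
  have hSH : Scᴴ = Sc := by
    rw [hSc, conjTranspose_sub, conjTranspose_mul, conjTranspose_mul, hinv, hCB,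
      conjTranspose_conjTranspose]
    have : Dmᴴ = Dm := by ext u u'; simp [hDm, conjTranspose_apply]; exact Complex.conj_ofReal m
    rw [this, Matrix.mul_assoc]
  set s : ℝ := (Sc () ()).re with hs
  have hconj : (starRingEnd ℂ) (Sc () ()) = Sc () () := by
    conv_rhs => rw [← hSH]
    rfl
  have hSval : Sc = fun _ _ => (s : ℂ) := by
    ext u u'
    cases u; cases u'
    exact (Complex.conj_eq_iff_re.1 hconj).symm
  -- determinants
  have hdetL : L.det = 1 := by
    rw [hL, det_fromBlocks_zero₂₁, det_one, det_one, mul_one]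
  have hdetD0 : D0.det = N.det * (s : ℂ) := by
    rw [hD0, det_fromBlocks_zero₂₁]
    congr 1
    rw [det_unique, hSval]
  have hdetM' : M.det = N.det * (s : ℂ) := by
    rw [hMeq, det_mul, det_mul, hdetL, mul_one, det_conjTranspose, hdetL, star_one, one_mul,
      hdetD0]
  have hs0 : s ≠ 0 := by
    intro h
    exact hdetM (by rw [hdetM', h]; simp)
  have hdetD0' : D0.det ≠ 0 := by
    rw [hdetD0]
    exact mul_ne_zero hdetN (Complex.ofReal_ne_zero.2 hs0)
  -- Hermitian facts
  have hD0H : D0.IsHermitian := by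
    show D0ᴴ = D0
    rw [hD0, fromBlocks_conjTranspose, hN.eq, hSH, conjTranspose_zero, conjTranspose_zero]
  have hD1H : (fromBlocks N 0 0 (fun (_ _ : Unit) => (s : ℂ))).IsHermitian := by
    rw [← hSval, ← hD0]; exact hD0H
  -- posCount chain
  have h1 : posCount hM = posCount hD0H :=
    posCount_conj' hD0H (by rw [hdetL]; exact isUnit_one) hM hMeq
  have h2 : posCount hD0H = posCount hD1H := posCount_congr (by rw [hD0, hSval]) _ _
  have h3 : posCount hD1H = posCount hN + (if 0 < s then 1 else 0) :=
    posCount_blockDiag hN hs0 hD1H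
  -- signatures
  have hsM := sig_eq hM hdetM
  have hsN := sig_eq hN hdetN
  rw [hsM, hsN, h1, h2, h3]
  have hcards : (Fintype.card (Fin n ⊕ Unit) : ℤ) = (Fintype.card (Fin n) : ℤ) + 1 := by simp
  rw [hcards]
  by_cases hp : 0 < s
  · rw [if_pos hp]; push_cast; ring_nf; simp
  · rw [if_neg hp]; push_cast; ring_nf; simp
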